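/- Let A₁, A₂ : ℝ → ℂ solve the ODE system i Aⱼ' = Fⱼ(A₁,A₂) with associated matrix 𝒜, and suppose 𝒜 has real entries, k > 0, Γ = (γ₁,γ₂,γ₃) satisfies 𝒜²Γ = -k²Γ with Γ ≠ 0, and Γ̃ = (γ̃₁,γ̃₂,γ̃₃) = k⁻¹𝒜Γ. Define ρ₁=|A₁|², ρ₂=|A₂|², R=2Re(conj(A₁)A₂), and Q(t) = (γ₁ρ₁ + γ₂R + γ₃ρ₂)² + (γ̃₁ρ₁ + γ̃₂R + γ̃₃ρ₂)². Then Q is constant in t. -/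

import Mathlib

open Matrix

/-- The general gauge-invariant cubic nonlinearity with six real coefficients. -/
noncomputable def Fcub (m₁ m₂ m₃ m₄ m₅ m₆ : ℝ) (u₁ u₂ : ℂ) : ℂ :=
  ((m₁ * Complex.normSq u₁ : ℝ) : ℂ) * u₁ + ((m₂ * Complex.normSq u₁ : ℝ) : ℂ) * u₂
    + (m₃ : ℂ) * u₁ ^ 2 * (starRingEnd ℂ) u₂ + ((m₄ * Complex.normSq u₂ : ℝ) : ℂ) * u₁
    + (m₅ : ℂ) * u₂ ^ 2 * (starRingEnd ℂ) u₁ + ((m₆ * Complex.normSq u₂ : ℝ) : ℂ) * u₂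

/-- The matrix part of the matrix-vector representation of the cubic system. -/
def Amat (l₁ l₂ l₃ l₄ l₅ l₆ l₇ l₈ l₉ l₁₀ l₁₁ l₁₂ : ℝ) : Matrix (Fin 3) (Fin 3) ℝ :=
  !![l₂ - l₃, -l₁ + l₈ - l₉, -l₇;
     l₅, -l₃ + l₁₁, -l₉;
     l₆, -l₄ + l₅ + l₁₂, -l₁₀ + l₁₁]

set_option maxHeartbeats 1000000 in
theorem stmt6 (l₁ l₂ l₃ l₄ l₅ l₆ l₇ l₈ l₉ l₁₀ l₁₁ l₁₂ : ℝ)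
    (A₁ A₂ A₁' A₂' : ℝ → ℂ)
    (hd₁ : ∀ t, HasDerivAt A₁ (A₁' t) t)
    (hd₂ : ∀ t, HasDerivAt A₂ (A₂' t) t)
    (hode₁ : ∀ t, Complex.I * A₁' t = Fcub l₁ l₂ l₃ l₄ l₅ l₆ (A₁ t) (A₂ t))
    (hode₂ : ∀ t, Complex.I * A₂' t = Fcub l₇ l₈ l₉ l₁₀ l₁₁ l₁₂ (A₁ t) (A₂ t))
    (k : ℝ) (hk : 0 < k) (Γ : Fin 3 → ℝ) (hΓ : Γ ≠ 0)
    (heig : let 𝒜 := Amat l₁ l₂ l₃ l₄ l₅ l₆ l₇ l₈ l₉ l₁₀ l₁₁ l₁₂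
      (𝒜 * 𝒜).mulVec Γ = (-(k ^ 2)) • Γ) :
    let 𝒜 := Amat l₁ l₂ l₃ l₄ l₅ l₆ l₇ l₈ l₉ l₁₀ l₁₁ l₁₂
    let Γt : Fin 3 → ℝ := k⁻¹ • 𝒜.mulVec Γ
    let ρ₁ : ℝ → ℝ := fun t => Complex.normSq (A₁ t)
    let ρ₂ : ℝ → ℝ := fun t => Complex.normSq (A₂ t)
    let R : ℝ → ℝ := fun t => 2 * ((starRingEnd ℂ) (A₁ t) * A₂ t).re
    let Q : ℝ → ℝ := fun t =>
      (Γ 0 * ρ₁ t + Γ 1 * R t + Γ 2 * ρ₂ t) ^ 2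
        + (Γt 0 * ρ₁ t + Γt 1 * R t + Γt 2 * ρ₂ t) ^ 2
    ∀ s t : ℝ, Q s = Q t := by
  intro 𝒜 Γt ρ₁ ρ₂ R Q
  have hk0 : k ≠ 0 := ne_of_gt hk
  have heig' : (𝒜 * 𝒜).mulVec Γ = (-(k ^ 2)) • Γ := heig
  -- the fundamental derivative identity
  have key : ∀ g : Fin 3 → ℝ, ∀ u : ℝ,
      HasDerivAt (fun t => g 0 * ρ₁ t + g 1 * R t + g 2 * ρ₂ t)
        (2 * ((starRingEnd ℂ) (A₁ u) * A₂ u).im *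
          (𝒜.mulVec g 0 * ρ₁ u + 𝒜.mulVec g 1 * R u + 𝒜.mulVec g 2 * ρ₂ u)) u := by
    intro g u
    have hA₁' : A₁' u = -Complex.I * Fcub l₁ l₂ l₃ l₄ l₅ l₆ (A₁ u) (A₂ u) := by
      have h := congrArg (fun z => -Complex.I * z) (hode₁ u)
      simpa [← mul_assoc, Complex.I_mul_I] using h
    have hA₂' : A₂' u = -Complex.I * Fcub l₇ l₈ l₉ l₁₀ l₁₁ l₁₂ (A₁ u) (A₂ u) := by
      have h := congrArg (fun z => -Complex.I * z) (hode₂ u)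
      simpa [← mul_assoc, Complex.I_mul_I] using h
    have hx₁ : HasDerivAt (fun t => (A₁ t).re) ((A₁' u).re) u :=
      Complex.reCLM.hasFDerivAt.comp_hasDerivAt u (hd₁ u)
    have hy₁ : HasDerivAt (fun t => (A₁ t).im) ((A₁' u).im) u :=
      Complex.imCLM.hasFDerivAt.comp_hasDerivAt u (hd₁ u)
    have hx₂ : HasDerivAt (fun t => (A₂ t).re) ((A₂' u).re) u :=
      Complex.reCLM.hasFDerivAt.comp_hasDerivAt u (hd₂ u)
    have hy₂ : HasDerivAt (fun t => (A₂ t).im) ((A₂' u).im) u :=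
      Complex.imCLM.hasFDerivAt.comp_hasDerivAt u (hd₂ u)
    have hraw : HasDerivAt (fun t => g 0 * ((A₁ t).re * (A₁ t).re + (A₁ t).im * (A₁ t).im)
        + g 1 * (2 * ((A₁ t).re * (A₂ t).re + (A₁ t).im * (A₂ t).im))
        + g 2 * ((A₂ t).re * (A₂ t).re + (A₂ t).im * (A₂ t).im))
        (g 0 * ((A₁' u).re * (A₁ u).re + (A₁ u).re * (A₁' u).re
            + ((A₁' u).im * (A₁ u).im + (A₁ u).im * (A₁' u).im))
          + g 1 * (2 * ((A₁' u).re * (A₂ u).re + (A₁ u).re * (A₂' u).re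
            + ((A₁' u).im * (A₂ u).im + (A₁ u).im * (A₂' u).im)))
          + g 2 * ((A₂' u).re * (A₂ u).re + (A₂ u).re * (A₂' u).re
            + ((A₂' u).im * (A₂ u).im + (A₂ u).im * (A₂' u).im))) u :=
      ((((hx₁.mul hx₁).add (hy₁.mul hy₁)).const_mul (g 0)).add
        ((((hx₁.mul hx₂).add (hy₁.mul hy₂)).const_mul (2:ℝ)).const_mul (g 1))).add
        (((hx₂.mul hx₂).add (hy₂.mul hy₂)).const_mul (g 2))
    have hfe : (fun t => g 0 * ρ₁ t + g 1 * R t + g 2 * ρ₂ t)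
        = (fun t => g 0 * ((A₁ t).re * (A₁ t).re + (A₁ t).im * (A₁ t).im)
        + g 1 * (2 * ((A₁ t).re * (A₂ t).re + (A₁ t).im * (A₂ t).im))
        + g 2 * ((A₂ t).re * (A₂ t).re + (A₂ t).im * (A₂ t).im)) := by
      funext t
      show g 0 * Complex.normSq (A₁ t) + g 1 * (2 * ((starRingEnd ℂ) (A₁ t) * A₂ t).re)
          + g 2 * Complex.normSq (A₂ t) = _
      simp [Complex.normSq_apply, Complex.mul_re]
    rw [hfe]
    convert hraw using 1
    rw [hA₁', hA₂']
    show 2 * ((starRingEnd ℂ) (A₁ u) * A₂ u).im *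
        (𝒜.mulVec g 0 * Complex.normSq (A₁ u)
          + 𝒜.mulVec g 1 * (2 * ((starRingEnd ℂ) (A₁ u) * A₂ u).re)
          + 𝒜.mulVec g 2 * Complex.normSq (A₂ u)) = _
    simp [𝒜, Amat, Matrix.mulVec, dotProduct, Fin.sum_univ_three,
      Fcub, Complex.normSq_apply, Complex.mul_re, Complex.mul_im,
      Complex.add_re, Complex.add_im, pow_two]
    ring
  -- the eigenvector relations
  have h1 : ∀ i, 𝒜.mulVec Γ i = k * Γt i := by
    intro i
    show 𝒜.mulVec Γ i = k * (k⁻¹ • 𝒜.mulVec Γ) i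
    simp [Pi.smul_apply, smul_eq_mul, ← mul_assoc, mul_inv_cancel₀ hk0]
  have h2 : ∀ i, 𝒜.mulVec Γt i = -k * Γ i := by
    have hm : 𝒜.mulVec Γt = (k⁻¹ * -(k ^ 2)) • Γ := by
      show 𝒜.mulVec (k⁻¹ • 𝒜.mulVec Γ) = _
      rw [Matrix.mulVec_smul, Matrix.mulVec_mulVec, heig', smul_smul]
    intro i
    rw [hm]
    have : k⁻¹ * -(k ^ 2) = -k := by field_simp
    simp [Pi.smul_apply, smul_eq_mul, this]
  -- Q has zero derivative
  have hQd : ∀ u : ℝ, HasDerivAt Q 0 u := by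
    intro u
    have hP := key Γ u
    have hPt := key Γt u
    rw [h1 0, h1 1, h1 2] at hP
    rw [h2 0, h2 1, h2 2] at hPt
    have comb := (hP.pow 2).add (hPt.pow 2)
    have hz : ((2:ℕ) : ℝ) * (Γ 0 * ρ₁ u + Γ 1 * R u + Γ 2 * ρ₂ u) ^ (2 - 1) *
          (2 * ((starRingEnd ℂ) (A₁ u) * A₂ u).im *
            (k * Γt 0 * ρ₁ u + k * Γt 1 * R u + k * Γt 2 * ρ₂ u))
        + ((2:ℕ) : ℝ) * (Γt 0 * ρ₁ u + Γt 1 * R u + Γt 2 * ρ₂ u) ^ (2 - 1) *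
          (2 * ((starRingEnd ℂ) (A₁ u) * A₂ u).im *
            (-k * Γ 0 * ρ₁ u + -k * Γ 1 * R u + -k * Γ 2 * ρ₂ u)) = 0 := by
      push_cast
      ring
    exact hz ▸ comb
  intro s t
  exact is_const_of_deriv_eq_zero (fun u => (hQd u).differentiableAt)
    (fun u => (hQd u).deriv) s t
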